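/- Let n, P, T ∈ ℕ, let W ⊆ ℝⁿ be a nonempty convex set, and for each p ∈ [P] let f_p : ℝⁿ → ℝ be convex. Let ρ_1 ≤ … ≤ ρ_T be positive reals with ρ_T ≤ ρmax, set η_t := 1/√t, and let U₂ ≥ 0 satisfy both Σ_{p=1}^P ‖u_p − u'_p‖² ≤ U₂ and (Σ_{p=1}^P ‖u_p − u'_p‖²)^{1/2} ≤ U₂ for all u, u' ∈ W^P. Let z¹_p ∈ W, λ¹_p ∈ ℝⁿ, and for each t ∈ [T] suppose: (i) wᵗ⁺¹ minimizes w ↦ Σ_{p=1}^P (⟨λᵗ_p, w⟩ + (ρ_t/2)‖w − zᵗ_p‖²) over ℝⁿ; (ii) vᵗ_p ∈ ℝⁿ satisfies f_p(u) ≥ f_p(zᵗ_p) + ⟨vᵗ_p, u − zᵗ_p⟩ for all u ∈ W; (iii) given noise vectors ξᵗ_p ∈ ℝⁿ, zᵗ⁺¹_p minimizes z ↦ ⟨vᵗ_p, z⟩ + (ρ_t/2)‖wᵗ⁺¹ − z + (λᵗ_p − ξᵗ_p)/ρ_t‖² + (1/(2η_t))‖z − zᵗ_p‖² over W; (iv)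 λᵗ⁺¹_p := λᵗ_p + ρ_t(wᵗ⁺¹ − zᵗ⁺¹_p). Let γ ≥ 0, let w* ∈ W, set z*_p := w* for all p, F(z) := Σ_p f_p(z_p), w^(T) := (1/T)Σ_t wᵗ⁺¹, z^(T)_p := (1/T)Σ_t zᵗ_p. Then: F(z^(T)) − F(z*) + γ·(Σ_{p=1}^P ‖w^(T) − z^(T)_p‖²)^{1/2} ≤ (1/T)·( Σ_{t=1}^T [ (η_t/2)·Σ_p ‖vᵗ_p + ξᵗ_p‖² + (1/(2η_t))·(Σ_p ‖z*_p − zᵗ_p‖² − Σ_p ‖z*_p − zᵗ⁺¹_p‖²) + Σ_p ⟨ξᵗ_p, z*_p − zᵗ_p⟩ ] + γ·U₂ + U₂·ρmax/2 + (γ + (Σ_p‖λ¹_p‖²)^{1/2})²/(2ρ_1) ). -/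

import Mathlib

open scoped RealInnerProductSpace
section Helpers
set_option linter.unusedSectionVars false
variable {E : Type*} [NormedAddCommGroup E] [InnerProductSpace ℝ E]
lemma three_pt (x b a : E) :
    2 * ⟪x - b, b - a⟫ = ‖x - a‖ ^ 2 - ‖x - b‖ ^ 2 - ‖b - a‖ ^ 2 := by
  have h : x - a = (x - b) + (b - a) := by abel
  rw [h, norm_add_sq_real]
  ring

lemma cross_id (a b c d : E) :
    2 * ⟪a - b, c - d⟫ = ‖a - d‖ ^ 2 - ‖b - d‖ ^ 2 + ‖b - c‖ ^ 2 - ‖a - c‖ ^ 2 := by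
  have h1 : a - d = (a - b) + (b - d) := by abel
  have h2 : b - c = (b - d) + (d - c) := by abel
  have h3 : a - c = (a - b) + (b - d) + (d - c) := by abel
  rw [h1, h2, h3, norm_add_sq_real, norm_add_sq_real, norm_add_sq_real, norm_add_sq_real]
  have h4 : ⟪a - b, c - d⟫ = - ⟪a - b, d - c⟫ := by
    rw [← inner_neg_right]; congr 1; abel
  rw [h4]
  simp only [inner_add_left]
  ring

lemma young_ineq (a b : E) (η : ℝ) (hη : 0 < η) :
    ⟪a, b⟫ ≤ η / 2 * ‖a‖ ^ 2 + 1 / (2 * η) * ‖b‖ ^ 2 := by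
  have h1 := real_inner_le_norm a b
  have key : 2 * η * (‖a‖ * ‖b‖) ≤ η ^ 2 * ‖a‖ ^ 2 + ‖b‖ ^ 2 := by
    nlinarith [sq_nonneg (η * ‖a‖ - ‖b‖)]
  have h3 : η / 2 * ‖a‖ ^ 2 + 1 / (2 * η) * ‖b‖ ^ 2 - ‖a‖ * ‖b‖
      = (η ^ 2 * ‖a‖ ^ 2 + ‖b‖ ^ 2 - 2 * η * (‖a‖ * ‖b‖)) / (2 * η) := by
    field_simp
  have h4 : (0:ℝ) ≤ (η ^ 2 * ‖a‖ ^ 2 + ‖b‖ ^ 2 - 2 * η * (‖a‖ * ‖b‖)) / (2 * η) :=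
    div_nonneg (by linarith) (by linarith)
  linarith


lemma step_nonneg (c C : ℝ) (hC : 0 ≤ C)
    (h : ∀ s : ℝ, 0 < s → s ≤ 1 → 0 ≤ s * c + s ^ 2 * C) : 0 ≤ c := by
  by_contra hc
  push_neg at hc
  have hcpos : 0 < -c := by linarith
  set s : ℝ := min 1 (-c / (2 * (C + 1))) with hs
  have hs0 : 0 < s := lt_min one_pos (div_pos hcpos (by positivity))
  have hs1 : s ≤ 1 := min_le_left _ _
  have hs2 : s ≤ -c / (2 * (C + 1)) := min_le_right _ _
  have h2 : s * (2 * (C + 1)) ≤ -c := by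
    have := (le_div_iff₀ (by positivity : (0:ℝ) < 2 * (C + 1))).mp hs2
    linarith
  have h3 := h s hs0 hs1
  nlinarith [mul_pos hs0 hs0]

lemma quad_diff (v y q m x : E) (ρ μ : ℝ) :
    (⟪v, m + x⟫ + ρ / 2 * ‖y - x‖ ^ 2 + μ * ‖q + x‖ ^ 2)
      - (⟪v, m⟫ + ρ / 2 * ‖y‖ ^ 2 + μ * ‖q‖ ^ 2)
    = ⟪v - ρ • y + (2 * μ) • q, x⟫ + (ρ / 2 + μ) * ‖x‖ ^ 2 := by
  rw [norm_sub_sq_real, norm_add_sq_real, inner_add_right, inner_add_left,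
    inner_sub_left, real_inner_smul_left, real_inner_smul_left]
  ring

lemma quad_diff_psi (v A d b m x : E) (ρ μ : ℝ) :
    (⟪v, m + x⟫ + ρ / 2 * ‖A - (m + x) + d‖ ^ 2 + μ * ‖m + x - b‖ ^ 2)
      - (⟪v, m⟫ + ρ / 2 * ‖A - m + d‖ ^ 2 + μ * ‖m - b‖ ^ 2)
    = ⟪v - ρ • (A - m + d) + (2 * μ) • (m - b), x⟫ + (ρ / 2 + μ) * ‖x‖ ^ 2 := by
  have h1 : A - (m + x) + d = (A - m + d) - x := by abel
  have h2 : m + x - b = (m - b) + x := by abel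
  rw [h1, h2, quad_diff]

/-- variational inequality for the constrained quadratic minimization -/
lemma min_quad_vi (Wset : Set E) (hW : Convex ℝ Wset) (v A d b m : E) (ρ μ : ℝ)
    (hρμ : 0 ≤ ρ / 2 + μ) (hm : m ∈ Wset)
    (hmin : IsMinOn (fun zz => ⟪v, zz⟫ + ρ / 2 * ‖A - zz + d‖ ^ 2 + μ * ‖zz - b‖ ^ 2) Wset m) :
    ∀ u ∈ Wset, 0 ≤ ⟪v - ρ • (A - m + d) + (2 * μ) • (m - b), u - m⟫ := by
  intro u hu
  set g : E := v - ρ • (A - m + d) + (2 * μ) • (m - b) with hg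
  apply step_nonneg _ ((ρ / 2 + μ) * ‖u - m‖ ^ 2) (by positivity)
  intro s hs0 hs1
  have hmem : m + s • (u - m) ∈ Wset := by
    have := hW hm hu (by linarith : (0:ℝ) ≤ 1 - s) hs0.le (by ring)
    convert this using 1
    rw [smul_sub, sub_smul, one_smul]
    abel
  have hle := hmin hmem
  simp only [Set.mem_setOf_eq] at hle
  have hdiff := quad_diff_psi v A d b m (s • (u - m)) ρ μ
  rw [real_inner_smul_right, norm_smul, Real.norm_eq_abs, mul_pow, sq_abs] at hdiff
  have : (0:ℝ) ≤ (⟪v, m + s • (u - m)⟫ + ρ / 2 * ‖A - (m + s • (u - m)) + d‖ ^ 2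
      + μ * ‖m + s • (u - m) - b‖ ^ 2)
      - (⟪v, m⟫ + ρ / 2 * ‖A - m + d‖ ^ 2 + μ * ‖m - b‖ ^ 2) := by
    have := hle
    linarith [this]
  rw [hdiff] at this
  nlinarith [this]

lemma quad_diff_w (v q m x : E) (ρ : ℝ) :
    (⟪v, m + x⟫ + ρ / 2 * ‖m + x - q‖ ^ 2) - (⟪v, m⟫ + ρ / 2 * ‖m - q‖ ^ 2)
    = ⟪v + ρ • (m - q), x⟫ + ρ / 2 * ‖x‖ ^ 2 := by
  have h2 : m + x - q = (m - q) + x := by abel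
  rw [h2, norm_add_sq_real, inner_add_right, inner_add_left, real_inner_smul_left]
  ring

/-- first-order condition for the unconstrained quadratic w-minimization -/
lemma min_quad_grad {P : ℕ} (lam0 z0 : Fin P → E) (ρ : ℝ) (hρ : 0 ≤ ρ) (m : E)
    (hmin : IsMinOn (fun wv => ∑ p, (⟪lam0 p, wv⟫ + ρ / 2 * ‖wv - z0 p‖ ^ 2)) Set.univ m) :
    ∑ p, (lam0 p + ρ • (m - z0 p)) = 0 := by
  set G : E := ∑ p, (lam0 p + ρ • (m - z0 p)) with hG
  have key : ∀ x : E, (∑ p, (⟪lam0 p, m + x⟫ + ρ / 2 * ‖m + x - z0 p‖ ^ 2))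
      - (∑ p, (⟪lam0 p, m⟫ + ρ / 2 * ‖m - z0 p‖ ^ 2))
      = ⟪G, x⟫ + (P : ℝ) * (ρ / 2) * ‖x‖ ^ 2 := by
    intro x
    rw [hG, sum_inner, ← Finset.sum_sub_distrib]
    rw [Finset.sum_congr rfl (fun p _ => quad_diff_w (lam0 p) (z0 p) m x ρ)]
    rw [Finset.sum_add_distrib, Finset.sum_const, Finset.card_univ, Fintype.card_fin]
    simp [nsmul_eq_mul]
    ring
  have hnn : 0 ≤ ⟪G, -G⟫ := by
    apply step_nonneg _ ((P : ℝ) * (ρ / 2) * ‖G‖ ^ 2) (by positivity)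
    intro s hs0 hs1
    have hle := hmin (Set.mem_univ (m + s • (-G)))
    simp only [Set.mem_setOf_eq] at hle
    have h0 : (0:ℝ) ≤ (∑ p, (⟪lam0 p, m + s • (-G)⟫ + ρ / 2 * ‖m + s • (-G) - z0 p‖ ^ 2))
        - (∑ p, (⟪lam0 p, m⟫ + ρ / 2 * ‖m - z0 p‖ ^ 2)) := by
      linarith [hle]
    rw [key (s • (-G)), real_inner_smul_right, norm_smul, Real.norm_eq_abs, mul_pow, sq_abs,
      norm_neg] at h0
    nlinarith [h0]
  have : ‖G‖ ^ 2 ≤ 0 := by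
    rw [inner_neg_right, real_inner_self_eq_norm_sq] at hnn
    linarith
  have : ‖G‖ = 0 := by nlinarith [norm_nonneg G]
  simpa [hG] using norm_eq_zero.mp this


/-- per-p inequality -/
lemma per_p (fz0 fstar : ℝ) (v ξ lam0 lam1 lamb z0 z1 w1 wstar : E) (ρ η : ℝ)
    (hρ : 0 < ρ) (hη : 0 < η)
    (hsub : fz0 + ⟪v, wstar - z0⟫ ≤ fstar)
    (hvi : 0 ≤ ⟪v - lam1 + ξ + η⁻¹ • (z1 - z0), wstar - z1⟫)
    (hlam : lam1 = lam0 + ρ • (w1 - z1)) :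
    fz0 - fstar + ⟪lamb, w1 - z0⟫ ≤
      η / 2 * ‖v + ξ‖ ^ 2 + 1 / (2 * η) * (‖wstar - z0‖ ^ 2 - ‖wstar - z1‖ ^ 2)
      + ⟪ξ, wstar - z0⟫
      + 1 / (2 * ρ) * (‖lamb - lam0‖ ^ 2 - ‖lamb - lam1‖ ^ 2) - ρ / 2 * ‖w1 - z1‖ ^ 2
      + ⟪lamb, z1 - z0⟫ + ⟪lam1, w1 - wstar⟫ := by
  -- h1
  have h1 : fz0 - fstar ≤ ⟪v, z0 - wstar⟫ := by
    have : ⟪v, z0 - wstar⟫ = - ⟪v, wstar - z0⟫ := by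
      rw [← inner_neg_right]; congr 1; abel
    linarith [hsub, this.ge]
  -- expanded VI
  have h2 : 0 ≤ ⟪v, wstar - z1⟫ - ⟪lam1, wstar - z1⟫ + ⟪ξ, wstar - z1⟫
      + η⁻¹ * ⟪z1 - z0, wstar - z1⟫ := by
    rw [inner_add_left, inner_add_left, inner_sub_left, real_inner_smul_left] at hvi
    linarith [hvi]
  -- three point for z
  have h4 : ⟪z1 - z0, wstar - z1⟫
      = (‖wstar - z0‖ ^ 2 - ‖wstar - z1‖ ^ 2 - ‖z1 - z0‖ ^ 2) / 2 := by
    have := three_pt wstar z1 z0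
    rw [real_inner_comm]
    linarith [this]
  have E2 : η⁻¹ * ⟪z1 - z0, wstar - z1⟫
      = 1 / (2 * η) * (‖wstar - z0‖ ^ 2 - ‖wstar - z1‖ ^ 2 - ‖z1 - z0‖ ^ 2) := by
    rw [h4]; ring
  -- Young
  have h3 : ⟪v + ξ, z0 - z1⟫ ≤ η / 2 * ‖v + ξ‖ ^ 2 + 1 / (2 * η) * ‖z1 - z0‖ ^ 2 := by
    have := young_ineq (v + ξ) (z0 - z1) η hη
    rw [norm_sub_rev] at this
    linarith [this]
  -- dual three point
  have h5 : 2 * ρ * ⟪lamb - lam1, w1 - z1⟫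
      = ‖lamb - lam0‖ ^ 2 - ‖lamb - lam1‖ ^ 2 - ρ ^ 2 * ‖w1 - z1‖ ^ 2 := by
    have ht := three_pt lamb lam1 lam0
    have hd : lam1 - lam0 = ρ • (w1 - z1) := by rw [hlam]; abel
    rw [hd, real_inner_smul_right, norm_smul, Real.norm_eq_abs, mul_pow, sq_abs] at ht
    linarith [ht]
  have E6 : ⟪lamb - lam1, w1 - z1⟫
      = 1 / (2 * ρ) * (‖lamb - lam0‖ ^ 2 - ‖lamb - lam1‖ ^ 2) - ρ / 2 * ‖w1 - z1‖ ^ 2 := by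
    have h2ρ : (2 * ρ) ≠ 0 := by positivity
    field_simp
    linarith [h5]
  -- decompositions (pure bilinearity)
  have E1 : ⟪v, z0 - wstar⟫ = ⟪v + ξ, z0 - z1⟫ + ⟪ξ, z1 - z0⟫ + ⟪v, z1 - wstar⟫ := by
    simp only [inner_sub_right, inner_add_left]; ring
  have E1b : ⟪v, z1 - wstar⟫ = - ⟪v, wstar - z1⟫ := by
    simp only [inner_sub_right]; ring
  have E3 : ⟪ξ, z1 - z0⟫ + ⟪ξ, wstar - z1⟫ = ⟪ξ, wstar - z0⟫ := by
    simp only [inner_sub_right]; ring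
  have E4 : - ⟪lam1, wstar - z1⟫ = - ⟪lam1, w1 - z1⟫ + ⟪lam1, w1 - wstar⟫ := by
    simp only [inner_sub_right]; ring
  have E5 : ⟪lamb, w1 - z0⟫
      = ⟪lamb - lam1, w1 - z1⟫ + ⟪lam1, w1 - z1⟫ + ⟪lamb, z1 - z0⟫ := by
    simp only [inner_sub_right, inner_sub_left]; ring
  have E5b : ⟪lamb - lam1, w1 - z1⟫ + ⟪lam1, w1 - z1⟫
      = ⟪lamb - lam1, w1 - z1⟫ + ⟪lam1, w1 - z1⟫ := rfl
  linarith [h1, h2, h3, E1, E1b, E2, E3, E4, E5, E6]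


lemma per_iter {P : ℕ} (f : Fin P → E → ℝ) (v ξ lam0 lam1 lamb z0 z1 : Fin P → E)
    (w1 wstar : E) (ρ η : ℝ) (hρ : 0 < ρ) (hη : 0 < η)
    (hsub : ∀ p, f p (z0 p) + ⟪v p, wstar - z0 p⟫ ≤ f p wstar)
    (hvi : ∀ p, 0 ≤ ⟪v p - lam1 p + ξ p + η⁻¹ • (z1 p - z0 p), wstar - z1 p⟫)
    (hlam : ∀ p, lam1 p = lam0 p + ρ • (w1 - z1 p))
    (hG : ∑ p, (lam0 p + ρ • (w1 - z0 p)) = 0) :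
    (∑ p, f p (z0 p)) - (∑ p, f p wstar) + ∑ p, ⟪lamb p, w1 - z0 p⟫ ≤
      (η / 2 * ∑ p, ‖v p + ξ p‖ ^ 2
        + 1 / (2 * η) * ((∑ p, ‖wstar - z0 p‖ ^ 2) - ∑ p, ‖wstar - z1 p‖ ^ 2)
        + ∑ p, ⟪ξ p, wstar - z0 p⟫)
      + 1 / (2 * ρ) * ((∑ p, ‖lamb p - lam0 p‖ ^ 2) - ∑ p, ‖lamb p - lam1 p‖ ^ 2)
      + ρ / 2 * ((∑ p, ‖z0 p - wstar‖ ^ 2) - ∑ p, ‖z1 p - wstar‖ ^ 2)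
      + ∑ p, ⟪lamb p, z1 p - z0 p⟫ := by
  have hp' : ∀ p : Fin P, f p (z0 p) - f p wstar + ⟪lamb p, w1 - z0 p⟫ ≤
      η / 2 * ‖v p + ξ p‖ ^ 2
      + 1 / (2 * η) * ‖wstar - z0 p‖ ^ 2 - 1 / (2 * η) * ‖wstar - z1 p‖ ^ 2
      + ⟪ξ p, wstar - z0 p⟫
      + 1 / (2 * ρ) * ‖lamb p - lam0 p‖ ^ 2 - 1 / (2 * ρ) * ‖lamb p - lam1 p‖ ^ 2
      - ρ / 2 * ‖w1 - z1 p‖ ^ 2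
      + ⟪lamb p, z1 p - z0 p⟫ + ⟪lam1 p, w1 - wstar⟫ := by
    intro p
    have := per_p (f p (z0 p)) (f p wstar) (v p) (ξ p) (lam0 p) (lam1 p) (lamb p)
      (z0 p) (z1 p) w1 wstar ρ η hρ hη (hsub p) (hvi p) (hlam p)
    linarith [this]
  have hsum := Finset.sum_le_sum (fun p (_ : p ∈ Finset.univ) => hp' p)
  simp only [Finset.sum_add_distrib, Finset.sum_sub_distrib, ← Finset.mul_sum] at hsum
  -- the dual-sum identity
  have hsum1 : ∑ p, lam1 p = ρ • ∑ p, (z0 p - z1 p) := by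
    have : ∀ p : Fin P, lam1 p = (lam0 p + ρ • (w1 - z0 p)) + ρ • (z0 p - z1 p) := by
      intro p
      rw [hlam p]
      simp only [smul_sub]
      abel
    rw [Finset.sum_congr rfl (fun p _ => this p), Finset.sum_add_distrib, hG, zero_add,
      ← Finset.smul_sum]
  have hw : ∑ p, ⟪lam1 p, w1 - wstar⟫ = ρ * ∑ p, ⟪z0 p - z1 p, w1 - wstar⟫ := by
    rw [← sum_inner, hsum1, real_inner_smul_left, sum_inner]
  have hcross : ∀ p : Fin P, ⟪z0 p - z1 p, w1 - wstar⟫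
      = (‖z0 p - wstar‖ ^ 2 - ‖z1 p - wstar‖ ^ 2 + ‖w1 - z1 p‖ ^ 2 - ‖z0 p - w1‖ ^ 2) / 2 := by
    intro p
    have h := cross_id (z0 p) (z1 p) w1 wstar
    rw [norm_sub_rev (z1 p) w1] at h
    linarith [h]
  have hsumeq : ∑ p, ⟪z0 p - z1 p, w1 - wstar⟫
      = ((∑ p, ‖z0 p - wstar‖ ^ 2) - (∑ p, ‖z1 p - wstar‖ ^ 2)
        + (∑ p, ‖w1 - z1 p‖ ^ 2) - ∑ p, ‖z0 p - w1‖ ^ 2) / 2 := by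
    rw [Finset.sum_congr rfl (fun p _ => hcross p)]
    rw [← Finset.sum_div, Finset.sum_sub_distrib, Finset.sum_add_distrib,
      Finset.sum_sub_distrib]
  have hDnn : (0:ℝ) ≤ ∑ p, ‖z0 p - w1‖ ^ 2 := by positivity
  have hcross' : ∑ p, ⟪lam1 p, w1 - wstar⟫ ≤
      ρ / 2 * (∑ p, ‖z0 p - wstar‖ ^ 2) - ρ / 2 * (∑ p, ‖z1 p - wstar‖ ^ 2)
      + ρ / 2 * (∑ p, ‖w1 - z1 p‖ ^ 2) := by
    rw [hw, hsumeq]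
    nlinarith [mul_nonneg hρ.le hDnn]
  linarith [hsum, hcross']


lemma tele_sum (g : ℕ → ℝ) : ∀ T : ℕ, 1 ≤ T →
    (∑ t ∈ Finset.Icc 1 T, (g (t + 1) - g t)) = g (T + 1) - g 1 := by
  intro T
  induction T with
  | zero => intro h; exact absurd h (by norm_num)
  | succ T ih =>
    intro _
    by_cases hT : T = 0
    · subst hT; simp
    · rw [Finset.sum_Icc_succ_top (by omega : 1 ≤ T + 1), ih (by omega)]
      ring

lemma tele_bound_inc (a S : ℕ → ℝ) (U : ℝ) : ∀ T : ℕ, 1 ≤ T →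
    (∀ t, 1 ≤ t → t ≤ T → 0 ≤ a t) →
    (∀ t, 1 ≤ t → t + 1 ≤ T → a t ≤ a (t + 1)) →
    (∀ t, 1 ≤ t → t ≤ T + 1 → 0 ≤ S t ∧ S t ≤ U) →
    ∑ t ∈ Finset.Icc 1 T, a t * (S t - S (t + 1)) ≤ a T * (U - S (T + 1)) := by
  intro T
  induction T with
  | zero => intro h; exact absurd h (by norm_num)
  | succ T ih =>
    intro _ ha hmono hS
    by_cases hT : T = 0
    · subst hT
      simp only [Finset.Icc_self, Finset.sum_singleton]
      have h1 := hS 1 le_rfl (by omega)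
      have h2 := hS 2 (by omega) (by omega)
      have := ha 1 le_rfl le_rfl
      nlinarith
    · have h1T : 1 ≤ T := by omega
      have hih := ih h1T (fun t h1 h2 => ha t h1 (by omega))
        (fun t h1 h2 => hmono t h1 (by omega)) (fun t h1 h2 => hS t h1 (by omega))
      rw [Finset.sum_Icc_succ_top (by omega : 1 ≤ T + 1)]
      have hm := hmono T h1T le_rfl
      have hST1 := hS (T + 1) (by omega) (by omega)
      have hST2 := hS (T + 2) (by omega) (by omega)
      have haT := ha T h1T (by omega)
      have haT1 := ha (T + 1) (by omega) le_rfl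
      nlinarith
lemma tele_bound_dec (a D : ℕ → ℝ) : ∀ T : ℕ, 1 ≤ T →
    (∀ t, 1 ≤ t → t ≤ T → 0 ≤ a t) →
    (∀ t, 1 ≤ t → t + 1 ≤ T → a (t + 1) ≤ a t) →
    (∀ t, 1 ≤ t → t ≤ T + 1 → 0 ≤ D t) →
    ∑ t ∈ Finset.Icc 1 T, a t * (D t - D (t + 1)) ≤ a 1 * D 1 - a T * D (T + 1) := by
  intro T
  induction T with
  | zero => intro h; exact absurd h (by norm_num)
  | succ T ih =>
    intro _ ha hmono hD
    by_cases hT : T = 0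
    · subst hT; simp only [Finset.Icc_self, Finset.sum_singleton]; ring_nf; norm_num [mul_sub]
    · have h1T : 1 ≤ T := by omega
      have hih := ih h1T (fun t h1 h2 => ha t h1 (by omega))
        (fun t h1 h2 => hmono t h1 (by omega)) (fun t h1 h2 => hD t h1 (by omega))
      rw [Finset.sum_Icc_succ_top (by omega : 1 ≤ T + 1)]
      have hm := hmono T h1T le_rfl
      have hDT1 := hD (T + 1) (by omega) (by omega)
      have hDT2 := hD (T + 2) (by omega) (by omega)
      have haT1 := ha (T + 1) (by omega) le_rfl
      nlinarith

lemma sum_inner_le_sqrt {P : ℕ} (a b : Fin P → E) :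
    ∑ p, ⟪a p, b p⟫ ≤ Real.sqrt (∑ p, ‖a p‖ ^ 2) * Real.sqrt (∑ p, ‖b p‖ ^ 2) := by
  let A : PiLp 2 (fun _ : Fin P => E) := (WithLp.equiv 2 _).symm a
  let B : PiLp 2 (fun _ : Fin P => E) := (WithLp.equiv 2 _).symm b
  have h1 : ⟪A, B⟫ = ∑ p, ⟪a p, b p⟫ := PiLp.inner_apply A B
  have h2 := real_inner_le_norm A B
  rw [h1, PiLp.norm_eq_of_L2, PiLp.norm_eq_of_L2] at h2
  exact h2

lemma sqrt_sum_sub_le {P : ℕ} (a b : Fin P → E) :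
    Real.sqrt (∑ p, ‖a p - b p‖ ^ 2)
      ≤ Real.sqrt (∑ p, ‖a p‖ ^ 2) + Real.sqrt (∑ p, ‖b p‖ ^ 2) := by
  let A : PiLp 2 (fun _ : Fin P => E) := (WithLp.equiv 2 _).symm a
  let B : PiLp 2 (fun _ : Fin P => E) := (WithLp.equiv 2 _).symm b
  have h2 := norm_sub_le A B
  rw [PiLp.norm_eq_of_L2, PiLp.norm_eq_of_L2, PiLp.norm_eq_of_L2] at h2
  convert h2 using 3
  all_goals rfl
end Helpers

set_option maxHeartbeats 1600000 in
/-- The deterministic inequality established in the proof of Theorem 3.7 (before taking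
expectations over the Laplace noise) for the DP inexact ADMM algorithm with proximal
step sizes `η_t = 1/√t`. -/
theorem DP_IADMM_deterministic_convergence_bound
    (n P T : ℕ) (hT : 1 ≤ T)
    (W : Set (EuclideanSpace ℝ (Fin n))) (hWne : W.Nonempty) (hWconvex : Convex ℝ W)
    (f : Fin P → EuclideanSpace ℝ (Fin n) → ℝ)
    (hf : ∀ p, ConvexOn ℝ Set.univ (f p))
    (ρ : ℕ → ℝ) (ρmax : ℝ)
    (hρpos : ∀ t ∈ Finset.Icc 1 T, 0 < ρ t)
    (hρmono : ∀ s ∈ Finset.Icc 1 T, ∀ t ∈ Finset.Icc 1 T, s ≤ t → ρ s ≤ ρ t)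
    (hρmax : ρ T ≤ ρmax)
    (η : ℕ → ℝ) (hη : ∀ t, η t = 1 / Real.sqrt t)
    (U₂ : ℝ)
    (hU₂sq : ∀ u u' : Fin P → EuclideanSpace ℝ (Fin n),
      (∀ p, u p ∈ W) → (∀ p, u' p ∈ W) → (∑ p, ‖u p - u' p‖ ^ 2) ≤ U₂)
    (hU₂rt : ∀ u u' : Fin P → EuclideanSpace ℝ (Fin n),
      (∀ p, u p ∈ W) → (∀ p, u' p ∈ W) → Real.sqrt (∑ p, ‖u p - u' p‖ ^ 2) ≤ U₂)
    (w : ℕ → EuclideanSpace ℝ (Fin n))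
    (z lam v ξ : ℕ → Fin P → EuclideanSpace ℝ (Fin n))
    (hz1W : ∀ p, z 1 p ∈ W)
    (hwmin : ∀ t ∈ Finset.Icc 1 T, IsMinOn
      (fun wv => ∑ p, (⟪lam t p, wv⟫ + ρ t / 2 * ‖wv - z t p‖ ^ 2))
      Set.univ (w (t + 1)))
    (hsub : ∀ t ∈ Finset.Icc 1 T, ∀ p, ∀ u ∈ W,
      f p (z t p) + ⟪v t p, u - z t p⟫ ≤ f p u)
    (hzW : ∀ t ∈ Finset.Icc 1 T, ∀ p, z (t + 1) p ∈ W)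
    (hzmin : ∀ t ∈ Finset.Icc 1 T, ∀ p, IsMinOn
      (fun zz => ⟪v t p, zz⟫ + ρ t / 2 * ‖w (t + 1) - zz + (ρ t)⁻¹ • (lam t p - ξ t p)‖ ^ 2
        + 1 / (2 * η t) * ‖zz - z t p‖ ^ 2) W (z (t + 1) p))
    (hlam : ∀ t ∈ Finset.Icc 1 T, ∀ p,
      lam (t + 1) p = lam t p + ρ t • (w (t + 1) - z (t + 1) p))
    (γ : ℝ) (hγ : 0 ≤ γ)
    (wstar : EuclideanSpace ℝ (Fin n)) (hwstar : wstar ∈ W)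
    (zstar : Fin P → EuclideanSpace ℝ (Fin n)) (hzstar : ∀ p, zstar p = wstar)
    (wavg : EuclideanSpace ℝ (Fin n)) (zavg : Fin P → EuclideanSpace ℝ (Fin n))
    (hwavg : wavg = (T : ℝ)⁻¹ • ∑ t ∈ Finset.Icc 1 T, w (t + 1))
    (hzavg : ∀ p, zavg p = (T : ℝ)⁻¹ • ∑ t ∈ Finset.Icc 1 T, z t p) :
    (∑ p, f p (zavg p)) - (∑ p, f p (zstar p))
        + γ * Real.sqrt (∑ p, ‖wavg - zavg p‖ ^ 2) ≤
      (T : ℝ)⁻¹ * ((∑ t ∈ Finset.Icc 1 T,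
          (η t / 2 * ∑ p, ‖v t p + ξ t p‖ ^ 2
            + 1 / (2 * η t) *
              ((∑ p, ‖zstar p - z t p‖ ^ 2) - ∑ p, ‖zstar p - z (t + 1) p‖ ^ 2)
            + ∑ p, ⟪ξ t p, zstar p - z t p⟫))
        + γ * U₂ + U₂ * ρmax / 2
        + (γ + Real.sqrt (∑ p, ‖lam 1 p‖ ^ 2)) ^ 2 / (2 * ρ 1)) := by
  simp only [hzstar]
  have hT0 : (0:ℝ) < T := by exact_mod_cast hT
  have hTne : (T:ℝ) ≠ 0 := ne_of_gt hT0
  have hcard : (Finset.Icc 1 T).card = T := by rw [Nat.card_Icc]; omega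
  have hηpos : ∀ t : ℕ, 1 ≤ t → 0 < η t := by
    intro t ht
    rw [hη]
    have h0 : (0:ℝ) < Real.sqrt t := Real.sqrt_pos.mpr (by exact_mod_cast ht)
    positivity
  have hzmem : ∀ t, 1 ≤ t → t ≤ T + 1 → ∀ p, z t p ∈ W := by
    intro t h1 h2 p
    match t, h1 with
    | 1, _ => exact hz1W p
    | (s+2), _ =>
      exact hzW (s+1) (Finset.mem_Icc.mpr ⟨by omega, by omega⟩) p
  have hU₂0 : 0 ≤ U₂ := by
    have := hU₂sq (fun _ => wstar) (fun _ => wstar) (fun _ => hwstar) (fun _ => hwstar)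
    simpa using this
  have hρ1 : 0 < ρ 1 := hρpos 1 (Finset.mem_Icc.mpr ⟨le_rfl, hT⟩)
  have hρT : 0 < ρ T := hρpos T (Finset.mem_Icc.mpr ⟨hT, le_rfl⟩)
  set L1 : ℝ := Real.sqrt (∑ p, ‖lam 1 p‖ ^ 2) with hL1
  -- the key inequality for an arbitrary dual vector of norm at most γ
  have key : ∀ lamb : Fin P → EuclideanSpace ℝ (Fin n),
      Real.sqrt (∑ p, ‖lamb p‖ ^ 2) ≤ γ →
      (∑ p, f p (zavg p)) - (∑ p, f p wstar) + ∑ p, ⟪lamb p, wavg - zavg p⟫ ≤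
        (T : ℝ)⁻¹ * ((∑ t ∈ Finset.Icc 1 T,
            (η t / 2 * ∑ p, ‖v t p + ξ t p‖ ^ 2
              + 1 / (2 * η t) *
                ((∑ p, ‖wstar - z t p‖ ^ 2) - ∑ p, ‖wstar - z (t + 1) p‖ ^ 2)
              + ∑ p, ⟪ξ t p, wstar - z t p⟫))
          + γ * U₂ + U₂ * ρmax / 2 + (γ + L1) ^ 2 / (2 * ρ 1)) := by
    intro lamb hlamb
    -- per-iteration inequality
    have hper : ∀ t ∈ Finset.Icc 1 T,
        (∑ p, f p (z t p)) - (∑ p, f p wstar) + ∑ p, ⟪lamb p, w (t+1) - z t p⟫ ≤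
          (η t / 2 * ∑ p, ‖v t p + ξ t p‖ ^ 2
            + 1 / (2 * η t) * ((∑ p, ‖wstar - z t p‖ ^ 2) - ∑ p, ‖wstar - z (t+1) p‖ ^ 2)
            + ∑ p, ⟪ξ t p, wstar - z t p⟫)
          + 1 / (2 * ρ t) * ((∑ p, ‖lamb p - lam t p‖ ^ 2) - ∑ p, ‖lamb p - lam (t+1) p‖ ^ 2)
          + ρ t / 2 * ((∑ p, ‖z t p - wstar‖ ^ 2) - ∑ p, ‖z (t+1) p - wstar‖ ^ 2)
          + ∑ p, ⟪lamb p, z (t+1) p - z t p⟫ := by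
      intro t ht
      obtain ⟨ht1, ht2⟩ := Finset.mem_Icc.mp ht
      have hρt := hρpos t ht
      have hηt := hηpos t ht1
      apply per_iter f (v t) (ξ t) (lam t) (lam (t+1)) lamb (z t) (z (t+1))
        (w (t+1)) wstar (ρ t) (η t) hρt hηt
      · exact fun p => hsub t ht p wstar hwstar
      · intro p
        have hμ : (0:ℝ) ≤ ρ t / 2 + 1 / (2 * η t) := by positivity
        have hvi0 := min_quad_vi W hWconvex (v t p) (w (t+1))
          ((ρ t)⁻¹ • (lam t p - ξ t p)) (z t p) (z (t+1) p) (ρ t) (1 / (2 * η t))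
          hμ (hzW t ht p) (hzmin t ht p) wstar hwstar
        have h2μ : (2 * (1 / (2 * η t))) = (η t)⁻¹ := by
          field_simp
        have hρd : ρ t • ((ρ t)⁻¹ • (lam t p - ξ t p)) = lam t p - ξ t p := by
          rw [smul_smul, mul_inv_cancel₀ hρt.ne', one_smul]
        have hgeq : v t p - ρ t • (w (t+1) - z (t+1) p + (ρ t)⁻¹ • (lam t p - ξ t p))
            + (2 * (1 / (2 * η t))) • (z (t+1) p - z t p)
            = v t p - lam (t+1) p + ξ t p + (η t)⁻¹ • (z (t+1) p - z t p) := by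
          rw [h2μ, smul_add, hρd, hlam t ht p]
          abel
        rw [hgeq] at hvi0
        exact hvi0
      · exact fun p => hlam t ht p
      · exact min_quad_grad (lam t) (z t) (ρ t) hρt.le (w (t+1)) (hwmin t ht)
    -- sum over t
    have hsumt := Finset.sum_le_sum hper
    -- telescoping bounds
    have hdual : ∑ t ∈ Finset.Icc 1 T,
        1 / (2 * ρ t) * ((∑ p, ‖lamb p - lam t p‖ ^ 2) - ∑ p, ‖lamb p - lam (t+1) p‖ ^ 2)
        ≤ (γ + L1) ^ 2 / (2 * ρ 1) := by
      have h := tele_bound_dec (fun s => 1 / (2 * ρ s))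
        (fun s => ∑ p, ‖lamb p - lam s p‖ ^ 2) T hT
        (fun t h1 h2 => by
          have := hρpos t (Finset.mem_Icc.mpr ⟨h1, h2⟩); positivity)
        (fun t h1 h2 => by
          have hρ1t := hρpos t (Finset.mem_Icc.mpr ⟨h1, by omega⟩)
          have hρ2t := hρpos (t+1) (Finset.mem_Icc.mpr ⟨by omega, h2⟩)
          have hm := hρmono t (Finset.mem_Icc.mpr ⟨h1, by omega⟩)
            (t+1) (Finset.mem_Icc.mpr ⟨by omega, h2⟩) (by omega)
          have h1' : (0:ℝ) < 2 * ρ t := by linarith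
          have h2' : (0:ℝ) < 2 * ρ (t+1) := by linarith
          rw [div_le_div_iff₀ h2' h1']
          nlinarith)
        (fun t h1 h2 => by positivity)
      have hD1 : (∑ p, ‖lamb p - lam 1 p‖ ^ 2) ≤ (γ + L1) ^ 2 := by
        have hmink := sqrt_sum_sub_le lamb (lam 1)
        have hle : Real.sqrt (∑ p, ‖lamb p - lam 1 p‖ ^ 2) ≤ γ + L1 := by
          rw [hL1]; exact le_trans hmink (by rw [hL1] at *; linarith [hlamb])
        nlinarith [Real.sq_sqrt (show (0:ℝ) ≤ ∑ p, ‖lamb p - lam 1 p‖ ^ 2 by positivity),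
          Real.sqrt_nonneg (∑ p, ‖lamb p - lam 1 p‖ ^ 2)]
      have hlast : 1 / (2 * ρ 1) * (∑ p, ‖lamb p - lam 1 p‖ ^ 2)
          - 1 / (2 * ρ T) * (∑ p, ‖lamb p - lam (T+1) p‖ ^ 2) ≤ (γ + L1) ^ 2 / (2 * ρ 1) := by
        have h1' : (0:ℝ) < 2 * ρ 1 := by linarith
        have h2' : (0:ℝ) ≤ 1 / (2 * ρ T) * (∑ p, ‖lamb p - lam (T+1) p‖ ^ 2) := by positivity
        have h3' : 1 / (2 * ρ 1) * (∑ p, ‖lamb p - lam 1 p‖ ^ 2)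
            ≤ 1 / (2 * ρ 1) * (γ + L1) ^ 2 := by
          apply mul_le_mul_of_nonneg_left hD1 (by positivity)
        calc 1 / (2 * ρ 1) * (∑ p, ‖lamb p - lam 1 p‖ ^ 2)
            - 1 / (2 * ρ T) * (∑ p, ‖lamb p - lam (T+1) p‖ ^ 2)
            ≤ 1 / (2 * ρ 1) * (γ + L1) ^ 2 := by linarith
          _ = (γ + L1) ^ 2 / (2 * ρ 1) := by ring
      exact le_trans h hlast
    have hprim : ∑ t ∈ Finset.Icc 1 T,
        ρ t / 2 * ((∑ p, ‖z t p - wstar‖ ^ 2) - ∑ p, ‖z (t+1) p - wstar‖ ^ 2)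
        ≤ U₂ * ρmax / 2 := by
      have h := tele_bound_inc (fun s => ρ s / 2)
        (fun s => ∑ p, ‖z s p - wstar‖ ^ 2) U₂ T hT
        (fun t h1 h2 => by
          have := hρpos t (Finset.mem_Icc.mpr ⟨h1, h2⟩); linarith)
        (fun t h1 h2 => by
          have hm := hρmono t (Finset.mem_Icc.mpr ⟨h1, by omega⟩)
            (t+1) (Finset.mem_Icc.mpr ⟨by omega, h2⟩) (by omega)
          linarith)
        (fun t h1 h2 => by
          constructor
          · positivity
          · exact hU₂sq (z t) (fun _ => wstar) (hzmem t h1 h2) (fun _ => hwstar))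
      have hSnn : (0:ℝ) ≤ ∑ p, ‖z (T+1) p - wstar‖ ^ 2 := by positivity
      nlinarith [h]
    have htel : ∑ t ∈ Finset.Icc 1 T, ∑ p, ⟪lamb p, z (t+1) p - z t p⟫ ≤ γ * U₂ := by
      rw [Finset.sum_comm]
      have hp : ∀ p : Fin P, ∑ t ∈ Finset.Icc 1 T, ⟪lamb p, z (t+1) p - z t p⟫
          = ⟪lamb p, z (T+1) p - z 1 p⟫ := by
        intro p
        have ht := tele_sum (fun s => ⟪lamb p, z s p⟫) T hT
        rw [Finset.sum_congr rfl (fun t _ => inner_sub_right (lamb p) (z (t+1) p) (z t p)),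
          inner_sub_right]
        exact ht
      rw [Finset.sum_congr rfl (fun p _ => hp p)]
      have hcs := sum_inner_le_sqrt lamb (fun p => z (T+1) p - z 1 p)
      have hU : Real.sqrt (∑ p, ‖z (T+1) p - z 1 p‖ ^ 2) ≤ U₂ :=
        hU₂rt (z (T+1)) (z 1) (hzmem (T+1) (by omega) (by omega)) hz1W
      calc ∑ p, ⟪lamb p, z (T+1) p - z 1 p⟫
          ≤ Real.sqrt (∑ p, ‖lamb p‖ ^ 2) * Real.sqrt (∑ p, ‖z (T+1) p - z 1 p‖ ^ 2) := hcs
        _ ≤ γ * U₂ := by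
            apply mul_le_mul hlamb hU (Real.sqrt_nonneg _) hγ
    -- combine the sums
    have hbig : ∑ t ∈ Finset.Icc 1 T,
        ((∑ p, f p (z t p)) - (∑ p, f p wstar) + ∑ p, ⟪lamb p, w (t+1) - z t p⟫) ≤
        (∑ t ∈ Finset.Icc 1 T,
            (η t / 2 * ∑ p, ‖v t p + ξ t p‖ ^ 2
              + 1 / (2 * η t) *
                ((∑ p, ‖wstar - z t p‖ ^ 2) - ∑ p, ‖wstar - z (t+1) p‖ ^ 2)
              + ∑ p, ⟪ξ t p, wstar - z t p⟫))
          + γ * U₂ + U₂ * ρmax / 2 + (γ + L1) ^ 2 / (2 * ρ 1) := by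
      have hsplit : ∑ t ∈ Finset.Icc 1 T,
          ((η t / 2 * ∑ p, ‖v t p + ξ t p‖ ^ 2
            + 1 / (2 * η t) * ((∑ p, ‖wstar - z t p‖ ^ 2) - ∑ p, ‖wstar - z (t+1) p‖ ^ 2)
            + ∑ p, ⟪ξ t p, wstar - z t p⟫)
          + 1 / (2 * ρ t) * ((∑ p, ‖lamb p - lam t p‖ ^ 2) - ∑ p, ‖lamb p - lam (t+1) p‖ ^ 2)
          + ρ t / 2 * ((∑ p, ‖z t p - wstar‖ ^ 2) - ∑ p, ‖z (t+1) p - wstar‖ ^ 2)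
          + ∑ p, ⟪lamb p, z (t+1) p - z t p⟫)
          = (∑ t ∈ Finset.Icc 1 T,
              (η t / 2 * ∑ p, ‖v t p + ξ t p‖ ^ 2
                + 1 / (2 * η t) *
                  ((∑ p, ‖wstar - z t p‖ ^ 2) - ∑ p, ‖wstar - z (t+1) p‖ ^ 2)
                + ∑ p, ⟪ξ t p, wstar - z t p⟫))
            + (∑ t ∈ Finset.Icc 1 T, 1 / (2 * ρ t) *
                ((∑ p, ‖lamb p - lam t p‖ ^ 2) - ∑ p, ‖lamb p - lam (t+1) p‖ ^ 2))
            + (∑ t ∈ Finset.Icc 1 T, ρ t / 2 *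
                ((∑ p, ‖z t p - wstar‖ ^ 2) - ∑ p, ‖z (t+1) p - wstar‖ ^ 2))
            + ∑ t ∈ Finset.Icc 1 T, ∑ p, ⟪lamb p, z (t+1) p - z t p⟫ := by
        rw [Finset.sum_add_distrib, Finset.sum_add_distrib, Finset.sum_add_distrib]
      rw [hsplit] at hsumt
      linarith [hsumt, hdual, hprim, htel]
    -- Jensen / averaging
    have hjen : ∀ p : Fin P, f p (zavg p)
        ≤ (T:ℝ)⁻¹ * ∑ t ∈ Finset.Icc 1 T, f p (z t p) := by
      intro p
      have hw1 : ∑ _t ∈ Finset.Icc 1 T, (T:ℝ)⁻¹ = 1 := by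
        rw [Finset.sum_const, hcard, nsmul_eq_mul, mul_inv_cancel₀ hTne]
      have hjs := (hf p).map_sum_le (fun _ _ => by positivity) hw1
        (fun t _ => Set.mem_univ (z t p))
      calc f p (zavg p) = f p (∑ t ∈ Finset.Icc 1 T, (T:ℝ)⁻¹ • z t p) := by
            rw [hzavg p, Finset.smul_sum]
        _ ≤ ∑ t ∈ Finset.Icc 1 T, (T:ℝ)⁻¹ * f p (z t p) := hjs
        _ = (T:ℝ)⁻¹ * ∑ t ∈ Finset.Icc 1 T, f p (z t p) := by rw [← Finset.mul_sum]
    have hjs : ∑ p, f p (zavg p)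
        ≤ (T:ℝ)⁻¹ * ∑ t ∈ Finset.Icc 1 T, ∑ p, f p (z t p) := by
      calc ∑ p, f p (zavg p)
          ≤ ∑ p, ((T:ℝ)⁻¹ * ∑ t ∈ Finset.Icc 1 T, f p (z t p)) :=
            Finset.sum_le_sum (fun p _ => hjen p)
        _ = (T:ℝ)⁻¹ * ∑ p, ∑ t ∈ Finset.Icc 1 T, f p (z t p) := by rw [← Finset.mul_sum]
        _ = (T:ℝ)⁻¹ * ∑ t ∈ Finset.Icc 1 T, ∑ p, f p (z t p) := by rw [Finset.sum_comm]
    have hinner : ∑ p, ⟪lamb p, wavg - zavg p⟫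
        = (T:ℝ)⁻¹ * ∑ t ∈ Finset.Icc 1 T, ∑ p, ⟪lamb p, w (t+1) - z t p⟫ := by
      have hdiff : ∀ p : Fin P, wavg - zavg p
          = (T:ℝ)⁻¹ • ∑ t ∈ Finset.Icc 1 T, (w (t+1) - z t p) := by
        intro p
        rw [hwavg, hzavg p, ← smul_sub, Finset.sum_sub_distrib]
      calc ∑ p, ⟪lamb p, wavg - zavg p⟫
          = ∑ p, ((T:ℝ)⁻¹ * ∑ t ∈ Finset.Icc 1 T, ⟪lamb p, w (t+1) - z t p⟫) := by
            refine Finset.sum_congr rfl (fun p _ => ?_)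
            rw [hdiff p, real_inner_smul_right, inner_sum]
        _ = (T:ℝ)⁻¹ * ∑ p, ∑ t ∈ Finset.Icc 1 T, ⟪lamb p, w (t+1) - z t p⟫ := by
            rw [← Finset.mul_sum]
        _ = (T:ℝ)⁻¹ * ∑ t ∈ Finset.Icc 1 T, ∑ p, ⟪lamb p, w (t+1) - z t p⟫ := by
            rw [Finset.sum_comm]
    have hLHSsum : ∑ t ∈ Finset.Icc 1 T,
        ((∑ p, f p (z t p)) - (∑ p, f p wstar) + ∑ p, ⟪lamb p, w (t+1) - z t p⟫)
        = (∑ t ∈ Finset.Icc 1 T, ∑ p, f p (z t p)) - (T:ℝ) * (∑ p, f p wstar)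
          + ∑ t ∈ Finset.Icc 1 T, ∑ p, ⟪lamb p, w (t+1) - z t p⟫ := by
      rw [Finset.sum_add_distrib, Finset.sum_sub_distrib, Finset.sum_const, hcard,
        nsmul_eq_mul]
    have hfinal := mul_le_mul_of_nonneg_left hbig (by positivity : (0:ℝ) ≤ (T:ℝ)⁻¹)
    rw [hLHSsum] at hfinal
    have hexp : (T:ℝ)⁻¹ * ((∑ t ∈ Finset.Icc 1 T, ∑ p, f p (z t p))
          - (T:ℝ) * (∑ p, f p wstar)
          + ∑ t ∈ Finset.Icc 1 T, ∑ p, ⟪lamb p, w (t+1) - z t p⟫)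
        = (T:ℝ)⁻¹ * (∑ t ∈ Finset.Icc 1 T, ∑ p, f p (z t p)) - (∑ p, f p wstar)
          + (T:ℝ)⁻¹ * ∑ t ∈ Finset.Icc 1 T, ∑ p, ⟪lamb p, w (t+1) - z t p⟫ := by
      field_simp
    rw [hexp] at hfinal
    rw [hinner]
    linarith [hjs, hfinal]
  -- choose the dual vector
  set N : ℝ := Real.sqrt (∑ p, ‖wavg - zavg p‖ ^ 2) with hN
  have hNnn : 0 ≤ N := Real.sqrt_nonneg _
  rcases eq_or_lt_of_le hNnn with hN0 | hNpos
  · have h0 := key (fun _ => 0) (by simp [hγ])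
    simp only [inner_zero_left, Finset.sum_const_zero, add_zero] at h0
    rw [← hN0]
    simpa using h0
  · have hSnn : (0:ℝ) ≤ ∑ p, ‖wavg - zavg p‖ ^ 2 := by positivity
    have hNsq : N ^ 2 = ∑ p, ‖wavg - zavg p‖ ^ 2 := Real.sq_sqrt hSnn
    have hNne : N ≠ 0 := ne_of_gt hNpos
    set lamb : Fin P → EuclideanSpace ℝ (Fin n) := fun p => (γ / N) • (wavg - zavg p)
      with hlambdef
    have hsumn : ∑ p, ‖lamb p‖ ^ 2 = (γ / N) ^ 2 * ∑ p, ‖wavg - zavg p‖ ^ 2 := by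
      rw [Finset.mul_sum]
      refine Finset.sum_congr rfl (fun p _ => ?_)
      rw [hlambdef]
      simp only []
      rw [norm_smul, Real.norm_eq_abs, mul_pow, sq_abs]
    have hnorm : Real.sqrt (∑ p, ‖lamb p‖ ^ 2) ≤ γ := by
      rw [hsumn, ← hNsq]
      have : (γ / N) ^ 2 * N ^ 2 = γ ^ 2 := by field_simp
      rw [this, Real.sqrt_sq hγ]
    have hip : ∑ p, ⟪lamb p, wavg - zavg p⟫ = γ * N := by
      have : ∀ p : Fin P, ⟪lamb p, wavg - zavg p⟫ = (γ / N) * ‖wavg - zavg p‖ ^ 2 := by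
        intro p
        rw [hlambdef]
        simp only []
        rw [real_inner_smul_left, real_inner_self_eq_norm_sq]
      rw [Finset.sum_congr rfl (fun p _ => this p), ← Finset.mul_sum, ← hNsq]
      field_simp
    have hk := key lamb hnorm
    rw [hip] at hk
    exact hk
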